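/- Let $k_1, k_2 \geq 2$. In the random directed graph $\vec{L}(2,(k_1,k_2))$ on vertex set $[k_1] \times [k_2]$, where each row and each column independently chooses a uniform random winner and all edges within that row/column point to the winner, the probability that the graph contains a directed cycle is at least $1/8$. -/

import Mathlib

/-- The best-response edge relation in `L(2,(k₁,k₂))`: the sample point `ω`
records, for each column, the winning row index, and for each row, the winning
column index; `u → v` iff `u ≠ v` lie in a common line and `v` is its winner. -/
def edge2 {k₁ k₂ : ℕ} (ω : (Fin k₂ → Fin k₁) × (Fin k₁ → Fin k₂))
    (u v : Fin k₁ × Fin k₂) : Prop :=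
  u ≠ v ∧ ((u.2 = v.2 ∧ ω.1 u.2 = v.1) ∨ (u.1 = v.1 ∧ ω.2 u.1 = v.2))

open Finset

lemma bonf {α γ : Type*} [Fintype α] [DecidableEq α] [DecidableEq γ]
    (P : Finset γ) (A : γ → Finset α) :
    2 * ∑ p ∈ P, (A p).card ≤
      2 * (P.biUnion A).card +
        ∑ pq ∈ (P ×ˢ P).filter (fun pq => pq.1 ≠ pq.2), (A pq.1 ∩ A pq.2).card := by
  classical
  have hcard : ∀ s : Finset α, s.card = ∑ x : α, if x ∈ s then 1 else 0 := by
    intro s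
    rw [← Finset.card_filter, Finset.filter_univ_mem]
  have hoff : ∀ x : α, (P.filter (fun p => x ∈ A p)).offDiag
      = ((P ×ˢ P).filter (fun pq => pq.1 ≠ pq.2)).filter
          (fun pq => x ∈ A pq.1 ∧ x ∈ A pq.2) := by
    intro x
    ext pq
    simp only [Finset.mem_offDiag, Finset.mem_filter, Finset.mem_product]
    tauto
  calc 2 * ∑ p ∈ P, (A p).card
      = ∑ x : α, 2 * (P.filter (fun p => x ∈ A p)).card := by
        simp_rw [hcard, Finset.card_filter, Finset.mul_sum]
        rw [Finset.sum_comm]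
    _ ≤ ∑ x : α, (2 * (if x ∈ P.biUnion A then 1 else 0) +
          ((P.filter (fun p => x ∈ A p)).offDiag).card) := by
        apply Finset.sum_le_sum
        intro x _
        set F := P.filter (fun p => x ∈ A p) with hF
        rcases Nat.eq_zero_or_pos F.card with h0 | h1
        · rw [h0]; simp
        · have hx : x ∈ P.biUnion A := by
            obtain ⟨p, hp⟩ := Finset.card_pos.mp h1
            rw [hF, Finset.mem_filter] at hp
            exact Finset.mem_biUnion.mpr ⟨p, hp.1, hp.2⟩
          rw [if_pos hx, Finset.offDiag_card]
          obtain ⟨s, hs⟩ := Nat.exists_eq_add_of_le h1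
          have hsq : (Nat.succ 0 + s) * (Nat.succ 0 + s) = s * s + 2 * s + 1 := by ring
          have h2 : s ≤ s * s := by
            cases s with
            | zero => simp
            | succ t => exact Nat.le_mul_of_pos_left _ (Nat.succ_pos t)
          rw [hs]
          omega
    _ = 2 * (P.biUnion A).card +
          ∑ pq ∈ (P ×ˢ P).filter (fun pq => pq.1 ≠ pq.2), (A pq.1 ∩ A pq.2).card := by
        rw [Finset.sum_add_distrib]
        congr 1
        · rw [← Finset.mul_sum, hcard (P.biUnion A)]
        · simp_rw [hoff, Finset.card_filter]
          rw [Finset.sum_comm]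
          congr 1
          ext pq
          rw [hcard (A pq.1 ∩ A pq.2)]
          congr 1
          ext x
          simp [Finset.mem_inter]

variable {k₁ k₂ : ℕ}

def Aset (k₁ k₂ : ℕ) (b b' : Fin k₂) : Finset ((Fin k₂ → Fin k₁) × (Fin k₁ → Fin k₂)) :=
  univ.filter (fun ω => ω.2 (ω.1 b) = b' ∧ ω.2 (ω.1 b') = b)

lemma badcard (b b' : Fin k₂) (hbb : b ≠ b') :
    (univ.filter (fun r : Fin k₂ → Fin k₁ => r b = r b')).card * k₁ ≤ k₁ ^ k₂ := by
  classical
  have h := Finset.card_le_card_of_injOn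
    (s := (univ.filter (fun r : Fin k₂ → Fin k₁ => r b = r b')) ×ˢ (univ : Finset (Fin k₁)))
    (t := (univ : Finset (Fin k₂ → Fin k₁)))
    (fun p => Function.update p.1 b' p.2)
    (fun a _ => mem_univ _) ?_
  · calc (univ.filter (fun r : Fin k₂ → Fin k₁ => r b = r b')).card * k₁
        = ((univ.filter (fun r : Fin k₂ → Fin k₁ => r b = r b')) ×ˢ (univ : Finset (Fin k₁))).card := by
          rw [Finset.card_product, Finset.card_univ, Fintype.card_fin]
      _ ≤ (univ : Finset (Fin k₂ → Fin k₁)).card := h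
      _ = k₁ ^ k₂ := by rw [Finset.card_univ, Fintype.card_fun]; simp
  · intro p hp q hq h
    simp only [Finset.coe_product, Set.mem_prod, Finset.mem_coe, Finset.mem_filter,
      Finset.mem_univ, true_and] at hp hq
    have h2 : p.2 = q.2 := by
      have := congrFun h b'
      dsimp only at this
      simpa [Function.update_self] using this
    have h1 : p.1 = q.1 := by
      funext a
      by_cases ha : a = b'
      · subst ha
        have hb2 := congrFun h b
        dsimp only at hb2
        rw [Function.update_of_ne hbb, Function.update_of_ne hbb] at hb2
        rw [← hp.1, ← hq.1]; exact hb2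
      · have := congrFun h a
        dsimp only at this
        rwa [Function.update_of_ne ha, Function.update_of_ne ha] at this
    exact Prod.ext h1 h2

lemma goodcard (b b' : Fin k₂) (hbb : b ≠ b') (hk₁ : 1 ≤ k₁) :
    (k₁ - 1) * k₁ ^ k₂ ≤ k₁ * (univ.filter (fun r : Fin k₂ → Fin k₁ => r b ≠ r b')).card := by
  have hsplit := Finset.card_filter_add_card_filter_not
    (s := (univ : Finset (Fin k₂ → Fin k₁))) (fun r => r b = r b')
  rw [Finset.card_univ, Fintype.card_fun, Fintype.card_fin, Fintype.card_fin] at hsplit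
  have hbad := badcard b b' hbb (k₁ := k₁)
  set B := (univ.filter (fun r : Fin k₂ → Fin k₁ => r b = r b')).card with hB
  set G := (univ.filter (fun r : Fin k₂ → Fin k₁ => r b ≠ r b')).card with hG
  clear_value B G
  rw [← hsplit] at hbad ⊢
  apply Nat.le_of_add_le_add_right (b := B + G)
  have e1 : (k₁ - 1) * (B + G) + (B + G) = ((k₁ - 1) + 1) * (B + G) := by ring
  have e2 : k₁ - 1 + 1 = k₁ := Nat.succ_pred_eq_of_pos hk₁
  rw [e1, e2]
  calc k₁ * (B + G) = B * k₁ + k₁ * G := by ring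
    _ ≤ (B + G) + k₁ * G := by exact Nat.add_le_add_right hbad _
    _ = k₁ * G + (B + G) := by ring

lemma Acard (b b' : Fin k₂) (hbb : b ≠ b') :
    (univ.filter (fun r : Fin k₂ → Fin k₁ => r b ≠ r b')).card * k₂ ^ k₁ ≤
      (Aset k₁ k₂ b b').card * (k₂ * k₂) := by
  classical
  have h := Finset.card_le_card_of_injOn
    (s := (univ.filter (fun r : Fin k₂ → Fin k₁ => r b ≠ r b')) ×ˢ
          (univ : Finset (Fin k₁ → Fin k₂)))
    (t := (Aset k₁ k₂ b b') ×ˢ (univ : Finset (Fin k₂ × Fin k₂)))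
    (fun p => ((p.1, fun a => if a = p.1 b then b' else if a = p.1 b' then b else p.2 a),
               (p.2 (p.1 b), p.2 (p.1 b'))))
    ?_ ?_
  · calc (univ.filter (fun r : Fin k₂ → Fin k₁ => r b ≠ r b')).card * k₂ ^ k₁
        = ((univ.filter (fun r : Fin k₂ → Fin k₁ => r b ≠ r b')) ×ˢ
            (univ : Finset (Fin k₁ → Fin k₂))).card := by
          rw [Finset.card_product, Finset.card_univ, Fintype.card_fun]
          simp
      _ ≤ ((Aset k₁ k₂ b b') ×ˢ (univ : Finset (Fin k₂ × Fin k₂))).card := h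
      _ = (Aset k₁ k₂ b b').card * (k₂ * k₂) := by
          rw [Finset.card_product, Finset.card_univ, Fintype.card_prod, Fintype.card_fin]
  · rintro ⟨r, c⟩ hp
    simp only [Finset.mem_coe, Finset.mem_product, Finset.mem_filter, Finset.mem_univ, true_and] at hp
    simp only [Finset.mem_coe, Finset.mem_product, Finset.mem_univ, and_true]
    simp only [Aset, Finset.mem_filter, Finset.mem_univ, true_and]
    constructor
    · simp
    · have : ¬ (r b' = r b) := fun h => hp.1 h.symm
      simp [this]
  · rintro ⟨r, c⟩ hp ⟨s, d⟩ hq h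
    simp only [Finset.coe_product, Set.mem_prod, Finset.mem_coe, Finset.mem_filter,
      Finset.mem_univ, true_and, and_true] at hp hq
    simp only [Prod.mk.injEq] at h
    obtain ⟨⟨hrs, hcd⟩, hy1, hy2⟩ := h
    subst hrs
    refine Prod.ext rfl ?_
    dsimp only at hcd hy1 hy2 ⊢
    funext a
    by_cases h1 : a = r b
    · subst h1; rw [hy1]
    · by_cases h2 : a = r b'
      · subst h2; rw [hy2]
      · have := congrFun hcd a
        simpa [h1, h2] using this

lemma mem_Aset_iff (b b' : Fin k₂) (ω : (Fin k₂ → Fin k₁) × (Fin k₁ → Fin k₂)) :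
    ω ∈ Aset k₁ k₂ b b' ↔ ω.2 (ω.1 b) = b' ∧ ω.2 (ω.1 b') = b := by
  simp [Aset]

lemma intcard (b b' d d' : Fin k₂) (h1 : b ≠ b') (h2 : b ≠ d) (h3 : b ≠ d')
    (h4 : b' ≠ d) (h5 : b' ≠ d') (h6 : d ≠ d') :
    ((Aset k₁ k₂ b b') ∩ (Aset k₁ k₂ d d')).card * (k₂ * k₂ * k₂ * k₂) ≤ k₁ ^ k₂ * k₂ ^ k₁ := by
  classical
  -- distinctness of the four r-points on the intersection
  have key : ∀ ω ∈ (Aset k₁ k₂ b b') ∩ (Aset k₁ k₂ d d'),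
      ω.1 b ≠ ω.1 b' ∧ ω.1 b ≠ ω.1 d ∧ ω.1 b ≠ ω.1 d' ∧ ω.1 b' ≠ ω.1 d ∧
        ω.1 b' ≠ ω.1 d' ∧ ω.1 d ≠ ω.1 d' := by
    intro ω hω
    rw [Finset.mem_inter, mem_Aset_iff, mem_Aset_iff] at hω
    obtain ⟨⟨e1, e2⟩, e3, e4⟩ := hω
    refine ⟨?_, ?_, ?_, ?_, ?_, ?_⟩ <;> intro h
    · exact h1 (by rw [← e1, h, e2])
    · exact h5 (by rw [← e1, h, e3])
    · exact h4 (by rw [← e1, h, e4])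
    · exact h3 (by rw [← e2, h, e3])
    · exact h2 (by rw [← e2, h, e4])
    · exact h6.symm (by rw [← e3, h, e4])
  have h := Finset.card_le_card_of_injOn
    (s := ((Aset k₁ k₂ b b') ∩ (Aset k₁ k₂ d d')) ×ˢ
          (univ : Finset (Fin k₂ × Fin k₂ × Fin k₂ × Fin k₂)))
    (t := (univ : Finset ((Fin k₂ → Fin k₁) × (Fin k₁ → Fin k₂))))
    (fun p => (p.1.1, fun a => if a = p.1.1 b then p.2.1 else if a = p.1.1 b' then p.2.2.1
      else if a = p.1.1 d then p.2.2.2.1 else if a = p.1.1 d' then p.2.2.2.2 else p.1.2 a))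
    (fun a _ => mem_univ _) ?_
  · calc ((Aset k₁ k₂ b b') ∩ (Aset k₁ k₂ d d')).card * (k₂ * k₂ * k₂ * k₂)
        = (((Aset k₁ k₂ b b') ∩ (Aset k₁ k₂ d d')) ×ˢ
            (univ : Finset (Fin k₂ × Fin k₂ × Fin k₂ × Fin k₂))).card := by
          rw [Finset.card_product, Finset.card_univ]
          simp only [Fintype.card_prod, Fintype.card_fin]
          ring
      _ ≤ (univ : Finset ((Fin k₂ → Fin k₁) × (Fin k₁ → Fin k₂))).card := h
      _ = k₁ ^ k₂ * k₂ ^ k₁ := by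
          rw [Finset.card_univ, Fintype.card_prod, Fintype.card_fun, Fintype.card_fun]
          simp
  · rintro ⟨⟨r, c⟩, y⟩ hp ⟨⟨s, e⟩, z⟩ hq h
    simp only [Finset.coe_product, Set.mem_prod, Finset.mem_coe, Finset.mem_univ, and_true]
      at hp hq
    have hkp := key _ hp
    have hkq := key _ hq
    obtain ⟨p1, p2, p3, p4, p5, p6⟩ := hkp
    simp only [Prod.mk.injEq] at h
    obtain ⟨hrs, hfun⟩ := h
    subst hrs
    dsimp only at hfun p1 p2 p3 p4 p5 p6
    -- recover the y components
    have hy1 : y.1 = z.1 := by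
      have := congrFun hfun (r b); simpa using this
    have hy2 : y.2.1 = z.2.1 := by
      have := congrFun hfun (r b')
      simpa [(Ne.symm p1)] using this
    have hy3 : y.2.2.1 = z.2.2.1 := by
      have := congrFun hfun (r d)
      simpa [(Ne.symm p2), (Ne.symm p4)] using this
    have hy4 : y.2.2.2 = z.2.2.2 := by
      have := congrFun hfun (r d')
      simpa [(Ne.symm p3), (Ne.symm p5), (Ne.symm p6)] using this
    -- recover c = e
    rw [Finset.mem_inter, mem_Aset_iff, mem_Aset_iff] at hp hq
    obtain ⟨⟨e1, e2⟩, e3, e4⟩ := hp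
    obtain ⟨⟨f1, f2⟩, f3, f4⟩ := hq
    dsimp only at e1 e2 e3 e4 f1 f2 f3 f4
    have hce : c = e := by
      funext a
      by_cases hb : a = r b
      · subst hb; rw [e1, f1]
      · by_cases hb' : a = r b'
        · subst hb'; rw [e2, f2]
        · by_cases hd : a = r d
          · subst hd; rw [e3, f3]
          · by_cases hd' : a = r d'
            · subst hd'; rw [e4, f4]
            · have := congrFun hfun a
              simpa [hb, hb', hd, hd'] using this
    refine Prod.ext (Prod.ext rfl ?_) ?_
    · exact hce
    · exact Prod.ext hy1 (Prod.ext hy2 (Prod.ext hy3 hy4))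

lemma int_empty (b b' d d' : Fin k₂) (hbb : b < b') (hdd : d < d')
    (hne : (b, b') ≠ (d, d'))
    (hshare : ¬(b ≠ d ∧ b ≠ d' ∧ b' ≠ d ∧ b' ≠ d')) :
    (Aset k₁ k₂ b b') ∩ (Aset k₁ k₂ d d') = ∅ := by
  classical
  rw [Finset.eq_empty_iff_forall_notMem]
  intro ω hω
  rw [Finset.mem_inter, mem_Aset_iff, mem_Aset_iff] at hω
  obtain ⟨⟨e1, e2⟩, e3, e4⟩ := hω
  by_cases hbd : b = d
  · have : b' = d' := by rw [← e1, hbd, e3]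
    exact hne (by rw [hbd, this])
  · by_cases hbd' : b = d'
    · have hb'd : b' = d := by rw [← e1, hbd', e4]
      have q1 : (b : ℕ) < (b' : ℕ) := hbb
      have q2 : (d : ℕ) < (d' : ℕ) := hdd
      have q3 : (b : ℕ) = (d' : ℕ) := by rw [hbd']
      have q4 : (b' : ℕ) = (d : ℕ) := by rw [hb'd]
      omega
    · by_cases hb'd : b' = d
      · have hbd'2 : b = d' := by rw [← e2, hb'd, e3]
        have q1 : (b : ℕ) < (b' : ℕ) := hbb
        have q2 : (d : ℕ) < (d' : ℕ) := hdd
        have q3 : (b : ℕ) = (d' : ℕ) := by rw [hbd'2]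
        have q4 : (b' : ℕ) = (d : ℕ) := by rw [hb'd]
        omega
      · by_cases hb'd' : b' = d'
        · have : b = d := by rw [← e2, hb'd', e4]
          exact hbd this
        · exact hshare ⟨hbd, hbd', hb'd, hb'd'⟩

def T4pred (k : ℕ) (v : Fin k × Fin k × Fin k × Fin k) : Prop :=
  v.1 ≠ v.2.1 ∧ v.1 ≠ v.2.2.1 ∧ v.1 ≠ v.2.2.2 ∧ v.2.1 ≠ v.2.2.1 ∧
    v.2.1 ≠ v.2.2.2 ∧ v.2.2.1 ≠ v.2.2.2

instance (k : ℕ) : DecidablePred (T4pred k) := fun v => by unfold T4pred; infer_instance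

lemma t4card (k : ℕ) :
    (univ.filter (T4pred k)).card ≤ k.descFactorial 4 := by
  classical
  rcases (univ.filter (T4pred k)).eq_empty_or_nonempty with he | ⟨v₀, hv₀⟩
  · rw [he]; simp
  · have hp₀ : T4pred k v₀ := (Finset.mem_filter.mp hv₀).2
    have hinj : ∀ v : Fin k × Fin k × Fin k × Fin k, T4pred k v →
        Function.Injective (fun i : Fin 4 => if i = 0 then v.1 else if i = 1 then v.2.1
          else if i = 2 then v.2.2.1 else v.2.2.2) := by
      intro v h
      obtain ⟨d1, d2, d3, d4, d5, d6⟩ := h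
      intro i j hij
      fin_cases i <;> fin_cases j <;> simp_all
    have h := Finset.card_le_card_of_injOn
      (s := univ.filter (T4pred k)) (t := (univ : Finset (Fin 4 ↪ Fin k)))
      (fun v => if h : T4pred k v then (⟨_, hinj v h⟩ : Fin 4 ↪ Fin k)
        else (⟨_, hinj v₀ hp₀⟩ : Fin 4 ↪ Fin k))
      (fun a _ => mem_univ _) ?_
    · calc (univ.filter (T4pred k)).card ≤ (univ : Finset (Fin 4 ↪ Fin k)).card := h
        _ = k.descFactorial 4 := by
            rw [Finset.card_univ, Fintype.card_embedding_eq]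
            simp
    · intro v hv w hw hvw
      simp only [Finset.mem_coe, Finset.mem_filter] at hv hw
      dsimp only at hvw
      rw [dif_pos hv.2, dif_pos hw.2] at hvw
      have key : ∀ i : Fin 4,
          (if i = 0 then v.1 else if i = 1 then v.2.1 else if i = 2 then v.2.2.1 else v.2.2.2)
          = (if i = 0 then w.1 else if i = 1 then w.2.1 else if i = 2 then w.2.2.1 else w.2.2.2) := by
        intro i
        exact congrFun (congrArg (fun e : Fin 4 ↪ Fin k => (e : Fin 4 → Fin k)) hvw) i
      have h0 := key 0
      have h1 := key 1
      have h2 := key 2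
      have h3 := key 3
      norm_num at h0 h1 h2 h3
      exact Prod.ext h0 (Prod.ext h1 (Prod.ext h2 h3))

lemma pair_lb (k : ℕ) :
    k * k - k ≤ 2 * (univ.filter (fun p : Fin k × Fin k => p.1 < p.2)).card := by
  classical
  have h := Finset.card_le_card_of_injOn
    (s := (univ : Finset (Fin k)).offDiag)
    (t := (univ.filter (fun p : Fin k × Fin k => p.1 < p.2)) ×ˢ (univ : Finset Bool))
    (fun p => (if p.1 < p.2 then p else (p.2, p.1), decide (p.1 < p.2)))
    ?_ ?_
  · calc k * k - k = (univ : Finset (Fin k)).offDiag.card := by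
          rw [Finset.offDiag_card, Finset.card_univ, Fintype.card_fin]
      _ ≤ _ := h
      _ = 2 * (univ.filter (fun p : Fin k × Fin k => p.1 < p.2)).card := by
          rw [Finset.card_product, Finset.card_univ, Fintype.card_bool]; ring
  · intro p hp
    rw [Finset.mem_coe, Finset.mem_offDiag] at hp
    dsimp only
    by_cases hlt : p.1 < p.2
    · simp [hlt]
    · have : p.2 < p.1 := lt_of_le_of_ne (not_lt.mp hlt) (Ne.symm hp.2.2)
      simp [hlt, this]
  · intro p hp q hq h
    rw [Finset.mem_coe, Finset.mem_offDiag] at hp hq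
    simp only [Prod.mk.injEq] at h
    obtain ⟨h1, h2⟩ := h
    by_cases hpl : p.1 < p.2 <;> by_cases hql : q.1 < q.2
    · rw [if_pos hpl, if_pos hql] at h1; exact h1
    · simp [hpl, hql] at h2
    · simp [hpl, hql] at h2
    · rw [if_neg hpl, if_neg hql] at h1
      simp only [Prod.mk.injEq] at h1
      exact Prod.ext h1.2 h1.1

lemma swap_inj {k : ℕ} (p q : Fin k × Fin k) (s t : Bool) (hp : p.1 < p.2) (hq : q.1 < q.2)
    (h1 : (cond s p.1 p.2) = (cond t q.1 q.2))
    (h2 : (cond s p.2 p.1) = (cond t q.2 q.1)) : p = q ∧ s = t := by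
  cases s <;> cases t <;> simp only [cond_true, cond_false] at h1 h2
  · exact ⟨Prod.ext h2 h1, rfl⟩
  · have : q.2 < q.1 := by rw [← h2, ← h1]; exact hp
    exact absurd this (asymm hq)
  · have : p.2 < p.1 := by rw [h2, h1]; exact hq
    exact absurd this (asymm hp)
  · exact ⟨Prod.ext h1 h2, rfl⟩

lemma D1_bound (k : ℕ) :
    ((((univ.filter (fun p : Fin k × Fin k => p.1 < p.2)) ×ˢ
        (univ.filter (fun p : Fin k × Fin k => p.1 < p.2))).filter
          (fun pq => pq.1 ≠ pq.2)).filter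
        (fun pq => pq.1.1 ≠ pq.2.1 ∧ pq.1.1 ≠ pq.2.2 ∧ pq.1.2 ≠ pq.2.1 ∧ pq.1.2 ≠ pq.2.2)).card
      * 4 ≤ k.descFactorial 4 := by
  classical
  set D1 := ((((univ.filter (fun p : Fin k × Fin k => p.1 < p.2)) ×ˢ
        (univ.filter (fun p : Fin k × Fin k => p.1 < p.2))).filter
          (fun pq => pq.1 ≠ pq.2)).filter
        (fun pq => pq.1.1 ≠ pq.2.1 ∧ pq.1.1 ≠ pq.2.2 ∧ pq.1.2 ≠ pq.2.1 ∧ pq.1.2 ≠ pq.2.2))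
    with hD1
  have hmem : ∀ x ∈ D1, x.1.1 < x.1.2 ∧ x.2.1 < x.2.2 ∧
      x.1.1 ≠ x.2.1 ∧ x.1.1 ≠ x.2.2 ∧ x.1.2 ≠ x.2.1 ∧ x.1.2 ≠ x.2.2 := by
    intro x hx
    rw [hD1, Finset.mem_filter, Finset.mem_filter, Finset.mem_product,
      Finset.mem_filter, Finset.mem_filter] at hx
    exact ⟨hx.1.1.1.2, hx.1.1.2.2, hx.2.1, hx.2.2.1, hx.2.2.2.1, hx.2.2.2.2⟩
  have h := Finset.card_le_card_of_injOn
    (s := D1 ×ˢ (univ : Finset (Bool × Bool)))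
    (t := univ.filter (T4pred k))
    (fun x => ((cond x.2.1 x.1.1.1 x.1.1.2),
               (cond x.2.1 x.1.1.2 x.1.1.1),
               (cond x.2.2 x.1.2.1 x.1.2.2),
               (cond x.2.2 x.1.2.2 x.1.2.1)))
    ?_ ?_
  · calc D1.card * 4 = (D1 ×ˢ (univ : Finset (Bool × Bool))).card := by
          rw [Finset.card_product, Finset.card_univ, Fintype.card_prod, Fintype.card_bool]
      _ ≤ (univ.filter (T4pred k)).card := h
      _ ≤ k.descFactorial 4 := t4card k
  · intro x hx
    rw [Finset.mem_coe, Finset.mem_product] at hx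
    obtain ⟨hp, hq, c11, c12, c21, c22⟩ := hmem _ hx.1
    rw [Finset.mem_coe, Finset.mem_filter]
    refine ⟨mem_univ _, ?_⟩
    unfold T4pred
    have hp' : x.1.1.1 ≠ x.1.1.2 := ne_of_lt hp
    have hq' : x.1.2.1 ≠ x.1.2.2 := ne_of_lt hq
    have hp'' := hp'.symm
    have hq'' := hq'.symm
    have c11' := c11.symm
    have c12' := c12.symm
    have c21' := c21.symm
    have c22' := c22.symm
    cases hb : x.2.1 <;> cases hb2 : x.2.2 <;>
      simp only [hb, hb2, cond_true, cond_false] <;> tauto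
  · intro x hx y hy hxy
    rw [Finset.mem_coe, Finset.mem_product] at hx hy
    obtain ⟨hpx, hqx, _⟩ := hmem _ hx.1
    obtain ⟨hpy, hqy, _⟩ := hmem _ hy.1
    simp only [Prod.mk.injEq] at hxy
    obtain ⟨e1, e2, e3, e4⟩ := hxy
    obtain ⟨hpq1, hst1⟩ := swap_inj _ _ _ _ hpx hpy e1 e2
    obtain ⟨hpq2, hst2⟩ := swap_inj _ _ _ _ hqx hqy e3 e4
    exact Prod.ext (Prod.ext hpq1 hpq2) (Prod.ext hst1 hst2)

lemma Aset_sub (b b' : Fin k₂) (hbb : b ≠ b')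
    (ω : (Fin k₂ → Fin k₁) × (Fin k₁ → Fin k₂)) (hω : ω ∈ Aset k₁ k₂ b b') :
    ∃ m : ℕ, ∃ _hm : 2 ≤ m, ∃ f : Fin m → Fin k₁ × Fin k₂,
      Function.Injective f ∧ ∀ i : Fin m, edge2 ω (f i) (f (i + ⟨1, by omega⟩)) := by
  rw [mem_Aset_iff] at hω
  obtain ⟨e1, e2⟩ := hω
  have hr : ω.1 b ≠ ω.1 b' := by
    intro h
    exact hbb (by rw [← e2, ← h, e1])
  refine ⟨4, le_of_eq rfl |>.trans (by omega), fun i =>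
    if i = 0 then (ω.1 b, b) else if i = 1 then (ω.1 b, b')
    else if i = 2 then (ω.1 b', b') else (ω.1 b', b), ?_, ?_⟩
  · intro i j h
    fin_cases i <;> fin_cases j <;> simp_all [Prod.ext_iff] <;>
      first
        | rfl
        | (exact absurd h.1 hr) | (exact absurd h.1 hr.symm)
        | (exact absurd h.2 hbb) | (exact absurd h.2 hbb.symm)
  · intro i
    fin_cases i
    · exact ⟨fun h => hbb (congrArg Prod.snd h), Or.inr ⟨rfl, e1⟩⟩
    · exact ⟨fun h => hr (congrArg Prod.fst h), Or.inl ⟨rfl, rfl⟩⟩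
    · exact ⟨fun h => hbb (congrArg Prod.snd h).symm, Or.inr ⟨rfl, e2⟩⟩
    · exact ⟨fun h => hr (congrArg Prod.fst h).symm, Or.inl ⟨rfl, rfl⟩⟩

lemma numeric (k : ℕ) (hk : 2 ≤ k) :
    k ^ 4 + k.descFactorial 4 ≤ 2 * (k - 1) * k ^ 3 := by
  obtain ⟨m, rfl⟩ : ∃ m, k = m + 2 := ⟨k - 2, by omega⟩
  rcases m with _ | j
  · decide
  · have h2 : (j + 1 + 2).descFactorial 4 = j * (j + 1) * (j + 2) * (j + 3) := by
      simp [Nat.descFactorial]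
      ring
    rw [h2]
    have h1 : j + 1 + 2 - 1 = j + 2 := by omega
    rw [h1]
    nlinarith [sq_nonneg j, sq_nonneg (j+1)]

/-- For `k₁, k₂ ≥ 2`, the random graph `L(2,(k₁,k₂))` (each row and column
independently choosing a uniform winner) contains a directed cycle with
probability at least `1/8`. -/
theorem stmt14 (k₁ k₂ : ℕ) (h₁ : 2 ≤ k₁) (h₂ : 2 ≤ k₂) :
    (1 : ℝ) / 8 ≤
      (({ω : (Fin k₂ → Fin k₁) × (Fin k₁ → Fin k₂) |
          ∃ m : ℕ, ∃ _hm : 2 ≤ m, ∃ f : Fin m → Fin k₁ × Fin k₂,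
            Function.Injective f ∧ ∀ i : Fin m, edge2 ω (f i) (f (i + ⟨1, by omega⟩))}.ncard : ℝ)) /
        (Fintype.card ((Fin k₂ → Fin k₁) × (Fin k₁ → Fin k₂))) := by
  classical
  obtain ⟨a, rfl⟩ : ∃ a, k₁ = a + 1 := ⟨k₁ - 1, by omega⟩
  obtain ⟨m, rfl⟩ : ∃ m, k₂ = m + 1 := ⟨k₂ - 1, by omega⟩
  set k₁ := a + 1 with hk₁
  set k₂ := m + 1 with hk₂
  have ha : 1 ≤ a := by omega
  have hm : 1 ≤ m := by omega
  set Sset : Set ((Fin k₂ → Fin k₁) × (Fin k₁ → Fin k₂)) :=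
    {ω : (Fin k₂ → Fin k₁) × (Fin k₁ → Fin k₂) |
          ∃ mm : ℕ, ∃ _hm : 2 ≤ mm, ∃ f : Fin mm → Fin k₁ × Fin k₂,
            Function.Injective f ∧ ∀ i : Fin mm, edge2 ω (f i) (f (i + ⟨1, by omega⟩))}
    with hSset
  set P : Finset (Fin k₂ × Fin k₂) := univ.filter (fun p => p.1 < p.2) with hP
  set U : Finset ((Fin k₂ → Fin k₁) × (Fin k₁ → Fin k₂)) :=
    P.biUnion (fun p => Aset k₁ k₂ p.1 p.2) with hU
  set T : ℕ := k₁ ^ k₂ * k₂ ^ k₁ with hT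
  set S : ℕ := ∑ p ∈ P, (Aset k₁ k₂ p.1 p.2).card with hS
  set D : Finset ((Fin k₂ × Fin k₂) × (Fin k₂ × Fin k₂)) :=
    (P ×ˢ P).filter (fun pq => pq.1 ≠ pq.2) with hD
  set D1 : Finset ((Fin k₂ × Fin k₂) × (Fin k₂ × Fin k₂)) :=
    D.filter (fun pq => pq.1.1 ≠ pq.2.1 ∧ pq.1.1 ≠ pq.2.2 ∧ pq.1.2 ≠ pq.2.1 ∧ pq.1.2 ≠ pq.2.2)
    with hD1
  set I : ℕ := ∑ pq ∈ D, ((Aset k₁ k₂ pq.1.1 pq.1.2) ∩ (Aset k₁ k₂ pq.2.1 pq.2.2)).card with hI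
  -- per-pair lower bound, summed
  have h1 : ∀ p ∈ P, (k₁ - 1) * T ≤ (k₁ * (k₂ * k₂)) * (Aset k₁ k₂ p.1 p.2).card := by
    intro p hp
    have hne : p.1 ≠ p.2 := ne_of_lt ((Finset.mem_filter.mp hp).2)
    calc (k₁ - 1) * T = ((k₁ - 1) * k₁ ^ k₂) * k₂ ^ k₁ := by rw [hT]; ring
      _ ≤ (k₁ * (univ.filter (fun r : Fin k₂ → Fin k₁ => r p.1 ≠ r p.2)).card) * k₂ ^ k₁ :=
          Nat.mul_le_mul_right _ (goodcard p.1 p.2 hne (by omega))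
      _ = ((univ.filter (fun r : Fin k₂ → Fin k₁ => r p.1 ≠ r p.2)).card * k₂ ^ k₁) * k₁ := by
          ring
      _ ≤ ((Aset k₁ k₂ p.1 p.2).card * (k₂ * k₂)) * k₁ :=
          Nat.mul_le_mul_right _ (Acard p.1 p.2 hne)
      _ = (k₁ * (k₂ * k₂)) * (Aset k₁ k₂ p.1 p.2).card := by ring
  have hsum : P.card * ((k₁ - 1) * T) ≤ (k₁ * (k₂ * k₂)) * S := by
    rw [hS, Finset.mul_sum]
    have := Finset.card_nsmul_le_sum P
      (fun p => (k₁ * (k₂ * k₂)) * (Aset k₁ k₂ p.1 p.2).card) ((k₁ - 1) * T) h1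
    simpa [smul_eq_mul] using this
  have hPcard : k₂ * k₂ - k₂ ≤ 2 * P.card := pair_lb k₂
  have hbonf : 2 * S ≤ 2 * U.card + I := bonf P (fun p => Aset k₁ k₂ p.1 p.2)
  -- intersection bound
  have hIcard : k₂ ^ 4 * I ≤ D1.card * T := by
    have hzero : ∀ pq ∈ D.filter (fun pq =>
        ¬(pq.1.1 ≠ pq.2.1 ∧ pq.1.1 ≠ pq.2.2 ∧ pq.1.2 ≠ pq.2.1 ∧ pq.1.2 ≠ pq.2.2)),
        ((Aset k₁ k₂ pq.1.1 pq.1.2) ∩ (Aset k₁ k₂ pq.2.1 pq.2.2)).card = 0 := by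
      intro pq hpq
      rw [Finset.mem_filter, hD, Finset.mem_filter, Finset.mem_product, hP,
        Finset.mem_filter, Finset.mem_filter] at hpq
      rw [Finset.card_eq_zero]
      have hne12 : (pq.1.1, pq.1.2) ≠ (pq.2.1, pq.2.2) := by
        intro h
        apply hpq.1.2
        calc pq.1 = (pq.1.1, pq.1.2) := rfl
          _ = (pq.2.1, pq.2.2) := h
          _ = pq.2 := rfl
      exact int_empty pq.1.1 pq.1.2 pq.2.1 pq.2.2 hpq.1.1.1.2 hpq.1.1.2.2 hne12 hpq.2
    have hsplit : I = ∑ pq ∈ D1,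
        ((Aset k₁ k₂ pq.1.1 pq.1.2) ∩ (Aset k₁ k₂ pq.2.1 pq.2.2)).card := by
      rw [hI, ← Finset.sum_filter_add_sum_filter_not D (fun pq =>
        pq.1.1 ≠ pq.2.1 ∧ pq.1.1 ≠ pq.2.2 ∧ pq.1.2 ≠ pq.2.1 ∧ pq.1.2 ≠ pq.2.2)
        (fun pq => ((Aset k₁ k₂ pq.1.1 pq.1.2) ∩ (Aset k₁ k₂ pq.2.1 pq.2.2)).card)]
      rw [Finset.sum_eq_zero hzero, add_zero]
    rw [hsplit, Finset.mul_sum]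
    calc ∑ pq ∈ D1, k₂ ^ 4 * ((Aset k₁ k₂ pq.1.1 pq.1.2) ∩ (Aset k₁ k₂ pq.2.1 pq.2.2)).card
        ≤ ∑ _pq ∈ D1, T := by
          apply Finset.sum_le_sum
          intro pq hpq
          rw [hD1, Finset.mem_filter, hD, Finset.mem_filter, Finset.mem_product, hP,
            Finset.mem_filter, Finset.mem_filter] at hpq
          obtain ⟨⟨⟨⟨_, hlt1⟩, ⟨_, hlt2⟩⟩, _⟩, c1, c2, c3, c4⟩ := hpq
          have hic := intcard pq.1.1 pq.1.2 pq.2.1 pq.2.2 (ne_of_lt hlt1) c1 c2 c3 c4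
            (ne_of_lt hlt2) (k₁ := k₁)
          calc k₂ ^ 4 * ((Aset k₁ k₂ pq.1.1 pq.1.2) ∩ (Aset k₁ k₂ pq.2.1 pq.2.2)).card
              = ((Aset k₁ k₂ pq.1.1 pq.1.2) ∩ (Aset k₁ k₂ pq.2.1 pq.2.2)).card
                  * (k₂ * k₂ * k₂ * k₂) := by ring
            _ ≤ k₁ ^ k₂ * k₂ ^ k₁ := hic
            _ = T := by rw [hT]
      _ = D1.card * T := by rw [Finset.sum_const, smul_eq_mul]
  have hD1b : D1.card * 4 ≤ k₂.descFactorial 4 := by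
    rw [hD1, hD, hP]
    exact D1_bound k₂
  have hnum := numeric k₂ (by omega)
  -- arithmetic assembly
  have hk₁1 : k₁ - 1 = a := by omega
  have hk₂1 : k₂ - 1 = m := by omega
  have hsubk : k₂ * k₂ - k₂ = k₂ * m := by
    have : k₂ * k₂ = k₂ * m + k₂ := by rw [hk₂]; ring
    omega
  have G1 : (k₂ * m) * (a * T) ≤ 2 * ((k₁ * (k₂ * k₂)) * S) := by
    have step1 := Nat.mul_le_mul_right ((k₁ - 1) * T) hPcard
    rw [hsubk, hk₁1] at step1
    calc (k₂ * m) * (a * T) ≤ (2 * P.card) * (a * T) := step1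
      _ = 2 * (P.card * (a * T)) := by ring
      _ ≤ 2 * ((k₁ * (k₂ * k₂)) * S) := by
          apply Nat.mul_le_mul_left
          rw [← hk₁1]
          exact hsum
  have hA1 : m * T ≤ 4 * (k₂ * S) := by
    have step : k₁ * (k₂ * (m * T)) ≤ k₁ * (k₂ * (4 * (k₂ * S))) := by
      calc k₁ * (k₂ * (m * T)) ≤ (2 * a) * (k₂ * (m * T)) :=
            Nat.mul_le_mul_right _ (by omega)
        _ = 2 * ((k₂ * m) * (a * T)) := by ring
        _ ≤ 2 * (2 * ((k₁ * (k₂ * k₂)) * S)) := Nat.mul_le_mul_left _ G1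
        _ = k₁ * (k₂ * (4 * (k₂ * S))) := by rw [hk₁]; ring
    exact Nat.le_of_mul_le_mul_left (Nat.le_of_mul_le_mul_left step (by omega)) (by omega)
  have hnumT : k₂ ^ 4 * T + (k₂.descFactorial 4) * T ≤ 2 * (m * (k₂ ^ 3 * T)) := by
    have hq1 := Nat.mul_le_mul_right T hnum
    rw [hk₂1] at hq1
    calc k₂ ^ 4 * T + (k₂.descFactorial 4) * T = (k₂ ^ 4 + k₂.descFactorial 4) * T := by ring
      _ ≤ (2 * m * k₂ ^ 3) * T := hq1
      _ = 2 * (m * (k₂ ^ 3 * T)) := by ring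
  have hchain : 2 * (m * (k₂ ^ 3 * T)) ≤ 8 * (k₂ ^ 4 * U.card) + (k₂.descFactorial 4) * T := by
    calc 2 * (m * (k₂ ^ 3 * T)) = k₂ ^ 3 * (2 * (m * T)) := by ring
      _ ≤ k₂ ^ 3 * (2 * (4 * (k₂ * S))) :=
          Nat.mul_le_mul_left _ (Nat.mul_le_mul_left _ hA1)
      _ = (4 * k₂ ^ 4) * (2 * S) := by ring
      _ ≤ (4 * k₂ ^ 4) * (2 * U.card + I) := Nat.mul_le_mul_left _ hbonf
      _ = 8 * (k₂ ^ 4 * U.card) + 4 * (k₂ ^ 4 * I) := by ring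
      _ ≤ 8 * (k₂ ^ 4 * U.card) + 4 * (D1.card * T) :=
          Nat.add_le_add_left (Nat.mul_le_mul_left _ hIcard) _
      _ = 8 * (k₂ ^ 4 * U.card) + (D1.card * 4) * T := by ring
      _ ≤ 8 * (k₂ ^ 4 * U.card) + (k₂.descFactorial 4) * T :=
          Nat.add_le_add_left (Nat.mul_le_mul_right _ hD1b) _
  have hfinal : T ≤ 8 * U.card := by
    have hq1 : k₂ ^ 4 * T + (k₂.descFactorial 4) * T
        ≤ 8 * (k₂ ^ 4 * U.card) + (k₂.descFactorial 4) * T := le_trans hnumT hchain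
    have hq2 : k₂ ^ 4 * T ≤ 8 * (k₂ ^ 4 * U.card) := Nat.le_of_add_le_add_right hq1
    have hq3 : k₂ ^ 4 * T ≤ k₂ ^ 4 * (8 * U.card) := by
      calc k₂ ^ 4 * T ≤ 8 * (k₂ ^ 4 * U.card) := hq2
        _ = k₂ ^ 4 * (8 * U.card) := by ring
    exact Nat.le_of_mul_le_mul_left hq3 (by positivity)
  -- U is contained in the cycle event
  have hU_sub : ∀ ω ∈ U, ω ∈ Sset := by
    intro ω hω
    rw [hU, Finset.mem_biUnion] at hω
    obtain ⟨p, hp, hmem⟩ := hω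
    rw [hP, Finset.mem_filter] at hp
    exact Aset_sub p.1 p.2 (ne_of_lt hp.2) ω hmem
  have hcard2 : U.card ≤ Sset.ncard := by
    rw [← Set.ncard_coe_finset U]
    exact Set.ncard_le_ncard (fun ω hω => hU_sub ω (Finset.mem_coe.mp hω)) (Set.toFinite _)
  have hftc : (Fintype.card ((Fin k₂ → Fin k₁) × (Fin k₁ → Fin k₂))) = T := by
    rw [hT, Fintype.card_prod, Fintype.card_fun, Fintype.card_fun, Fintype.card_fin,
      Fintype.card_fin]
  have hTpos : 0 < T := by rw [hT]; positivity
  rw [hftc]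
  have hTpos' : (0 : ℝ) < (T : ℝ) := by exact_mod_cast hTpos
  rw [le_div_iff₀ hTpos']
  have hchain2 : T ≤ 8 * Sset.ncard := le_trans hfinal (Nat.mul_le_mul_left 8 hcard2)
  have hcast : (T : ℝ) ≤ 8 * (Sset.ncard : ℝ) := by exact_mod_cast hchain2
  linarith
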